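/- Let L be a semisimple crossed π-algebra over a field K of characteristic 0. For any basic idempotent i ∈ L_1 and α ∈ π: dim(i·L_α) = 1 if φ_α(i) = i, and dim(i·L_α) = 0 otherwise. -/

import Mathlib

/-- A crossed `G`-algebra over `K`, realized as a `G`-grading by submodules of an
ambient associative unital `K`-algebra `A`, together with a symmetric Frobenius
form `η` and an action `φ` of `G` by algebra automorphisms satisfying the axioms
(3.1.1)–(3.2.4) of Turaev. -/
structure CrossedAlgebra (K : Type*) [CommRing K] (A : Type*) [Ring A] [Algebra K A]
    (G : Type*) [Group G] [DecidableEq G] where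
  comp : G → Submodule K A
  one_mem : (1 : A) ∈ comp 1
  mul_mem : ∀ {α β : G} {a b : A}, a ∈ comp α → b ∈ comp β → a * b ∈ comp (α * β)
  internal : DirectSum.IsInternal comp
  projective : ∀ α : G, Module.Projective K (comp α)
  finite : ∀ α : G, Module.Finite K (comp α)
  η : A →ₗ[K] A →ₗ[K] K
  η_symm : ∀ a b : A, η a b = η b a
  η_graded : ∀ {α β : G} {a b : A}, a ∈ comp α → b ∈ comp β → α * β ≠ 1 → η a b = 0
  η_nondeg : ∀ α : G,
    Function.Bijective fun a : comp α => (η (a : A)).domRestrict (comp α⁻¹)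
  η_assoc : ∀ a b c : A, η (a * b) c = η a (b * c)
  φ : G →* (A ≃ₐ[K] A)
  φ_η : ∀ (β : G) (a b : A), η (φ β a) (φ β b) = η a b
  φ_comp : ∀ (β : G) {α : G} {a : A}, a ∈ comp α → φ β a ∈ comp (β * α * β⁻¹)
  φ_self : ∀ {β : G} {a : A}, a ∈ comp β → φ β a = a
  φ_cross : ∀ {α β : G} {a b : A}, a ∈ comp α → b ∈ comp β → (φ β a) * b = b * a
  φ_trace : ∀ {α β : G} {c : A}, c ∈ comp (α * β * α⁻¹ * β⁻¹) →
    ∀ (f : comp α →ₗ[K] comp α) (g : comp β →ₗ[K] comp β),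
      (∀ x : comp α, (f x : A) = c * φ β (x : A)) →
      (∀ x : comp β, (g x : A) = φ α⁻¹ (c * (x : A))) →
      LinearMap.trace K (comp α) f = LinearMap.trace K (comp β) g


/-- Let `L` be a semisimple crossed `π`-algebra over a field `K` of
characteristic 0, i.e. `L_1` has a basis of mutually annihilating idempotents.
For any basic idempotent `i = b j₀` and any `α ∈ π`:
`dim(i·L_α) = 1` if `φ_α(i) = i`, and `dim(i·L_α) = 0` otherwise. -/
theorem semisimple_crossedAlgebra_dim_idempotent_comp {K : Type*} [Field K] [CharZero K]
    {A : Type*} [Ring A] [Algebra K A] {G : Type*} [Group G] [DecidableEq G]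
    (S : CrossedAlgebra K A G)
    {ι : Type*} (b : Module.Basis ι K (S.comp 1))
    (hidem : ∀ j, ((b j : A)) * ((b j : A)) = (b j : A))
    (hann : ∀ j k, j ≠ k → ((b j : A)) * ((b k : A)) = 0)
    (j₀ : ι) (α : G) :
    (S.φ α (b j₀ : A) = (b j₀ : A) →
      Module.finrank K
        (Submodule.map (LinearMap.mulLeft K ((b j₀ : A))) (S.comp α)) = 1) ∧
    (S.φ α (b j₀ : A) ≠ (b j₀ : A) →
      Module.finrank K
        (Submodule.map (LinearMap.mulLeft K ((b j₀ : A))) (S.comp α)) = 0) := by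
  classical
  haveI := S.finite α
  haveI := S.finite (1 : G)
  haveI : Finite ι := Module.Finite.finite_basis b
  haveI : Fintype ι := Fintype.ofFinite ι
  set i : A := (b j₀ : A) with hi
  have hiL1 : i ∈ S.comp 1 := (b j₀).2
  have hine : i ≠ 0 := fun h => b.ne_zero j₀ (Subtype.ext h)
  -- φ inverses
  have hφinv : ∀ x : A, S.φ α⁻¹ (S.φ α x) = x := fun x => by
    rw [← AlgEquiv.mul_apply, ← map_mul, inv_mul_cancel, map_one, AlgEquiv.one_apply]
  have hφinv' : ∀ x : A, S.φ α (S.φ α⁻¹ x) = x := fun x => by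
    rw [← AlgEquiv.mul_apply, ← map_mul, mul_inv_cancel, map_one, AlgEquiv.one_apply]
  -- key multiplication lemmas
  have key_r : ∀ y : S.comp 1, (y : A) * i = b.repr y j₀ • i := by
    intro y
    have hy : (y : A) = ∑ k, b.repr y k • (b k : A) := by
      conv_lhs => rw [← b.sum_repr y]
      push_cast
      rfl
    rw [hy, Finset.sum_mul, Finset.sum_eq_single j₀]
    · rw [smul_mul_assoc, hi, hidem j₀]
    · intro k _ hk
      rw [smul_mul_assoc, hi, hann k j₀ hk, smul_zero]
    · intro h; exact absurd (Finset.mem_univ j₀) h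
  have key_l : ∀ y : S.comp 1, i * (y : A) = b.repr y j₀ • i := by
    intro y
    have hy : (y : A) = ∑ k, b.repr y k • (b k : A) := by
      conv_lhs => rw [← b.sum_repr y]
      push_cast
      rfl
    rw [hy, Finset.mul_sum, Finset.sum_eq_single j₀]
    · rw [mul_smul_comm, hi, hidem j₀]
    · intro k _ hk
      rw [mul_smul_comm, hi, hann j₀ k (Ne.symm hk), smul_zero]
    · intro h; exact absurd (Finset.mem_univ j₀) h
  -- the two endomorphisms
  have hmemf : ∀ x : S.comp α, i * (x : A) ∈ S.comp α := fun x => by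
    simpa using S.mul_mem hiL1 x.2
  let f : S.comp α →ₗ[K] S.comp α :=
    LinearMap.codRestrict (S.comp α)
      ((LinearMap.mulLeft K i).comp (S.comp α).subtype) hmemf
  have hf : ∀ x : S.comp α, (f x : A) = i * (x : A) := fun x => rfl
  have hmemg : ∀ y : S.comp 1, S.φ α⁻¹ (i * (y : A)) ∈ S.comp 1 := fun y => by
    have h1 : i * (y : A) ∈ S.comp 1 := by simpa using S.mul_mem hiL1 y.2
    simpa using S.φ_comp α⁻¹ h1
  let g : S.comp 1 →ₗ[K] S.comp 1 :=
    LinearMap.codRestrict (S.comp 1)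
      ((S.φ α⁻¹).toLinearMap.comp ((LinearMap.mulLeft K i).comp (S.comp 1).subtype)) hmemg
  have hg : ∀ y : S.comp 1, (g y : A) = S.φ α⁻¹ (i * (y : A)) := fun y => rfl
  -- apply axiom (3.2.4) with β = 1, c = i
  have hc : i ∈ S.comp (α * 1 * α⁻¹ * 1⁻¹) := by simpa using hiL1
  have htr : LinearMap.trace K (S.comp α) f = LinearMap.trace K (S.comp 1) g := by
    apply S.φ_trace hc f g
    · intro x
      rw [hf x, map_one S.φ, AlgEquiv.one_apply]
    · intro x
      exact hg x
  -- element E = φ_{α⁻¹}(i)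
  have hEmem : S.φ α⁻¹ i ∈ S.comp 1 := by simpa using S.φ_comp α⁻¹ hiL1
  set E : S.comp 1 := ⟨S.φ α⁻¹ i, hEmem⟩ with hE
  -- trace of g equals j₀-coordinate of E
  have htr_g : LinearMap.trace K (S.comp 1) g = b.repr E j₀ := by
    rw [LinearMap.trace_eq_matrix_trace K b g, Matrix.trace]
    rw [Finset.sum_eq_single j₀]
    · have hgj : g (b j₀) = E := by
        apply Subtype.ext
        rw [hg (b j₀), hE, ← hi, hidem j₀]
      rw [Matrix.diag, LinearMap.toMatrix_apply, hgj]
    · intro k _ hk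
      have hgk : g (b k) = 0 := by
        apply Subtype.ext
        rw [hg (b k), hi, hann j₀ k (Ne.symm hk), map_zero]
        rfl
      rw [Matrix.diag, LinearMap.toMatrix_apply, hgk]
      simp
    · intro h; exact absurd (Finset.mem_univ j₀) h
  -- f is a projection onto its range
  have hproj : LinearMap.IsProj (LinearMap.range f) f := by
    constructor
    · intro x; exact LinearMap.mem_range_self f x
    · rintro x ⟨y, rfl⟩
      apply Subtype.ext
      rw [hf, hf, ← mul_assoc, hi, hidem j₀]
  have htr_f : LinearMap.trace K (S.comp α) f
      = (Module.finrank K (LinearMap.range f) : K) := by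
    haveI : Module.Free K (LinearMap.range f) := Module.Free.of_divisionRing K (LinearMap.range f)
    haveI : Module.Free K (LinearMap.ker f) := Module.Free.of_divisionRing K (LinearMap.ker f)
    exact hproj.trace
  -- identify the submodule in the statement with the range of f
  have hmapeq : Submodule.map (LinearMap.mulLeft K i) (S.comp α)
      = Submodule.map (S.comp α).subtype (LinearMap.range f) := by
    ext x
    simp only [Submodule.mem_map, LinearMap.mem_range, LinearMap.mulLeft_apply,
      Submodule.coe_subtype]
    constructor
    · rintro ⟨a, ha, rfl⟩
      exact ⟨f ⟨a, ha⟩, ⟨⟨a, ha⟩, rfl⟩, rfl⟩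
    · rintro ⟨y, ⟨z, rfl⟩, rfl⟩
      exact ⟨(z : A), z.2, (hf z).symm⟩
  have hrank : Module.finrank K (Submodule.map (LinearMap.mulLeft K i) (S.comp α))
      = Module.finrank K (LinearMap.range f) := by
    rw [hmapeq]
    exact Submodule.finrank_map_subtype_eq (S.comp α) (LinearMap.range f)
  -- conclude
  constructor
  · intro hfix
    have hEi : E = b j₀ := by
      apply Subtype.ext
      rw [hE]
      show S.φ α⁻¹ i = i
      conv_lhs => rw [← hfix]
      exact hφinv i
    have h1 : (Module.finrank K (LinearMap.range f) : K) = 1 := by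
      rw [← htr_f, htr, htr_g, hEi, b.repr_self, Finsupp.single_eq_same]
    rw [hrank]
    exact_mod_cast h1
  · intro hfix
    have hc0 : b.repr E j₀ = 0 := by
      by_contra hc0
      -- e' := φ_α(i)
      have hE'mem : S.φ α i ∈ S.comp 1 := by simpa using S.φ_comp α hiL1
      set E' : S.comp 1 := ⟨S.φ α i, hE'mem⟩ with hE'
      have hEc : (E : A) = S.φ α⁻¹ i := rfl
      have hE'c : (E' : A) = S.φ α i := rfl
      -- (E : A) * i = c₀ • i
      have h1 : (E : A) * i = b.repr E j₀ • i := key_r E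
      -- apply φ_α
      have h2 : i * (E' : A) = b.repr E j₀ • (E' : A) := by
        have h := congrArg (S.φ α) h1
        rw [map_mul, map_smul, hEc, hφinv' i, ← hE'c] at h
        exact h
      have h3 : i * (E' : A) = b.repr E' j₀ • i := key_l E'
      -- E' = l • i
      have hE'eq : (E' : A) = ((b.repr E j₀)⁻¹ * b.repr E' j₀) • i := by
        have h := h2.symm.trans h3
        calc (E' : A) = (b.repr E j₀)⁻¹ • (b.repr E j₀ • (E' : A)) := by
              rw [smul_smul, inv_mul_cancel₀ hc0, one_smul]
          _ = (b.repr E j₀)⁻¹ • (b.repr E' j₀ • i) := by rw [h]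
          _ = _ := by rw [smul_smul]
      set l : K := (b.repr E j₀)⁻¹ * b.repr E' j₀ with hl
      -- E' is idempotent
      have hE'idem : (E' : A) * (E' : A) = (E' : A) := by
        rw [hE'c, ← map_mul, hi, hidem j₀]
      -- hence l * l = l
      have h4 : (l * l) • i = l • i := by
        have h := hE'idem
        rw [hE'eq, smul_mul_assoc, mul_smul_comm, smul_smul, hi, hidem j₀] at h
        rw [hi]
        exact h
      have h5 : l = 0 ∨ l = 1 := by
        have h6 : (l * l - l) • i = 0 := by rw [sub_smul, h4, sub_self]
        rcases smul_eq_zero.mp h6 with h | h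
        · have h7 : l * (l - 1) = 0 := by linear_combination h
          rcases mul_eq_zero.mp h7 with h | h
          · exact Or.inl h
          · exact Or.inr (sub_eq_zero.mp h)
        · exact absurd h hine
      rcases h5 with h | h
      · -- l = 0 : then φ_α(i) = 0, contradicting injectivity of φ_α
        rw [h, zero_smul] at hE'eq
        have h9 : S.φ α (i : A) = 0 := hE'c.symm.trans hE'eq
        have h10 : i = 0 := by rw [← hφinv i, h9, map_zero]
        exact hine h10
      · -- l = 1 : then φ_α(i) = i, contradicting the hypothesis
        rw [h, one_smul] at hE'eq
        exact hfix (hE'c.symm.trans hE'eq)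
    have h0 : (Module.finrank K (LinearMap.range f) : K) = 0 := by
      rw [← htr_f, htr, htr_g, hc0]
    rw [hrank]
    exact_mod_cast h0
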